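/- Let A be a commutative local ring with maximal ideal m and residue field κ = A/m, and let v_1, …, v_r ∈ A^n be vectors whose images in κ^n under coordinatewise reduction modulo m are κ-linearly independent. Then v_1, …, v_r form a basis of the A-submodule N of A^n that they generate (so N is free of rank r), N is a direct summand of A^n, and the quotient A^n/N is a free A-module of rank n − r. -/

import Mathlib

open IsLocalRing Set Matrix

/-- Let `A` be a commutative local ring with residue field `κ`, and
`v₁, …, v_r ∈ Aⁿ` vectors whose coordinatewise reductions modulo the maximal ideal are
`κ`-linearly independent. Then the `vᵢ` form a basis of the submodule `N` they generate
(in particular `N` is free of rank `r`), `N` is a direct summand of `Aⁿ`, and `Aⁿ/N` is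
free of rank `n - r`. -/
theorem span_of_residually_independent
    {A : Type*} [CommRing A] [IsLocalRing A] {n r : ℕ}
    (v : Fin r → (Fin n → A))
    (hv : LinearIndependent (IsLocalRing.ResidueField A)
      (fun i j => IsLocalRing.residue A (v i j))) :
    LinearIndependent A v ∧
    Nonempty ((Submodule.span A (Set.range v)) ≃ₗ[A] (Fin r → A)) ∧
    (∃ N' : Submodule A (Fin n → A), IsCompl (Submodule.span A (Set.range v)) N') ∧
    Nonempty (((Fin n → A) ⧸ Submodule.span A (Set.range v)) ≃ₗ[A] (Fin (n - r) → A)) := by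
  classical
  set κ := IsLocalRing.ResidueField A
  -- extend the residues to a basis of κ^n
  let b0 := Module.Basis.sumExtend hv
  haveI : Finite (Fin r ⊕ Module.Basis.sumExtendIndex hv) := Module.Finite.finite_basis b0
  haveI : Finite (Module.Basis.sumExtendIndex hv) := Finite.of_injective (Sum.inr : _ → Fin r ⊕ Module.Basis.sumExtendIndex hv) Sum.inr_injective
  haveI : Fintype (Module.Basis.sumExtendIndex hv) := Fintype.ofFinite _
  have hcard : r + Fintype.card (Module.Basis.sumExtendIndex hv) = n := by
    have := Module.finrank_eq_card_basis b0
    simp only [Module.finrank_pi, Fintype.card_sum, Fintype.card_fin] at this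
    omega
  have hrn : r ≤ n := by omega
  let eσ : Module.Basis.sumExtendIndex hv ≃ Fin (n - r) :=
    Fintype.equivFinOfCardEq (by omega)
  let bκ : Module.Basis (Fin r ⊕ Fin (n - r)) κ (Fin n → κ) :=
    b0.reindex (Equiv.sumCongr (Equiv.refl _) eσ)
  have hbκl : ∀ i, bκ (Sum.inl i) = fun j => residue A (v i j) := by
    intro i
    simp only [bκ, b0, Module.Basis.sumExtend, Module.Basis.reindex_apply, Module.Basis.extend_apply_self,
      Equiv.symm_symm, Equiv.sumCongr_apply, Equiv.trans_apply, Sum.map_inl, Equiv.refl_apply]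
    rfl
  -- lift to A^n
  let w : Fin r ⊕ Fin (n - r) → (Fin n → A) :=
    Sum.elim v (fun k j => Function.surjInv (IsLocalRing.residue_surjective (R := A)) (bκ (Sum.inr k) j))
  have hw : ∀ i j, residue A (w i j) = bκ i j := by
    rintro (i | k) j
    · rw [hbκl i]; rfl
    · exact Function.surjInv_eq (IsLocalRing.residue_surjective (R := A)) _
  let e : (Fin r ⊕ Fin (n - r)) ≃ Fin n :=
    (finSumFinEquiv).trans (finCongr (by omega))
  let M : Matrix (Fin n) (Fin n) A := fun i j => w (e.symm i) j
  have hMκ : IsUnit (M.map (residue A)) := by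
    have hrow : (fun i => (M.map (residue A)) i) = ⇑(bκ.reindex e) := by
      ext i j
      rw [Module.Basis.reindex_apply]
      exact hw _ _
    rw [← Matrix.linearIndependent_rows_iff_isUnit]
    change LinearIndependent _ (fun i => (M.map (residue A)) i)
    rw [hrow]
    exact (bκ.reindex e).linearIndependent
  have hdet : IsUnit M.det := by
    have h1 : IsUnit (M.map (residue A)).det := (Matrix.isUnit_iff_isUnit_det _).mp hMκ
    have h2 : (M.map (residue A)).det = residue A M.det := by
      rw [RingHom.map_det]; rfl
    rw [h2] at h1
    rw [← residue_ne_zero_iff_isUnit]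
    exact h1.ne_zero
  -- basis of A^n with vectors given by rows of M
  have hdet' : IsUnit (LinearMap.toMatrix (Pi.basisFun A (Fin n)) (Pi.basisFun A (Fin n))
      (Matrix.toLin' Mᵀ)).det := by
    rw [LinearMap.toMatrix_eq_toMatrix', LinearMap.toMatrix'_toLin', Matrix.det_transpose]
    exact hdet
  let B : Module.Basis (Fin n) A (Fin n → A) :=
    (Pi.basisFun A (Fin n)).map (LinearEquiv.ofIsUnitDet hdet')
  have hB : ∀ i, B i = w (e.symm i) := by
    intro i
    ext j
    simp only [B, Module.Basis.map_apply, LinearEquiv.ofIsUnitDet_apply, Pi.basisFun_apply,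
      Matrix.toLin'_apply]
    simp [Matrix.mulVec_single, M, Matrix.transpose_apply]
    rfl
  let Bf := B.reindex e.symm
  have hBf : ⇑Bf = w := by
    ext i j
    rw [Module.Basis.reindex_apply, Equiv.symm_symm, hB, Equiv.symm_apply_apply]
  have hwli : LinearIndependent A w := by
    rw [← hBf]; exact Bf.linearIndependent
  have hvw : w ∘ Sum.inl = v := rfl
  have hsum := linearIndependent_sum.mp hwli
  have hvli : LinearIndependent A v := by rw [← hvw]; exact hsum.1
  refine ⟨hvli, ⟨(Module.Basis.span hvli).equivFun⟩, ?_, ?_⟩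
  · refine ⟨Submodule.span A (Set.range (w ∘ Sum.inr)), ?_⟩
    constructor
    · rw [← hvw]
      exact hsum.2.2
    · have hr : Set.range w = Set.range (w ∘ Sum.inl) ∪ Set.range (w ∘ Sum.inr) := by
        conv_lhs => rw [← Sum.elim_comp_inl_inr w]
        exact Sum.elim_range _ _
      rw [codisjoint_iff, ← hvw, ← Submodule.span_union, ← hr, ← hBf]
      exact Bf.span_eq
  · have hcompl : IsCompl (Submodule.span A (Set.range v))
        (Submodule.span A (Set.range (w ∘ Sum.inr))) := by
      constructor
      · rw [← hvw]; exact hsum.2.2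
      · have hr : Set.range w = Set.range (w ∘ Sum.inl) ∪ Set.range (w ∘ Sum.inr) := by
          conv_lhs => rw [← Sum.elim_comp_inl_inr w]
          exact Sum.elim_range _ _
        rw [codisjoint_iff, ← hvw, ← Submodule.span_union, ← hr, ← hBf]
        exact Bf.span_eq
    exact ⟨(Submodule.quotientEquivOfIsCompl _ _ hcompl).trans
      (Module.Basis.span hsum.2.1).equivFun⟩
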